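/- Let F ⊂ ℝ² be a C² closed strictly convex curve, and on the set M̃ = {(k₁,k₂) ∈ F × F : min(d(k₁,k₂), d(a(k₁),k₂)) ≥ ω₁} the angle θ(k₁,k₂) between the normals at k₁ and k₂ satisfies |sin θ(k₁,k₂)| ≥ c · ω₁ for a constant c > 0 depending only on F. -/

import Mathlib

/-- Lower bound for the angle between normals on the set `M̃`.  `F = range γ`
is a strictly convex closed C² plane curve with curvature `κ` bounded between
`κ₀ > 0` and `κ₁` (arc-length parametrization `γ` of period `L`, tangent-angle
`θ`).  `dF` is the arc-length distance on the curve and `α` the antipodal map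
in the arc-length parameter (`θ (α s) = θ s + π`).  There is a constant
`c > 0`, depending only on `F`, such that whenever
`min(d(k₁, k₂), d(a k₁, k₂)) ≥ ω₁` (i.e. on `M̃`), the angle `θ(k₁, k₂)`
between the normals at `k₁ = γ s` and `k₂ = γ t` satisfies
`|sin θ(k₁, k₂)| ≥ c·ω₁`. -/
theorem sin_angle_lower_bound_on_Mtilde
    (L : ℝ) (hL : 0 < L) (γ : ℝ → ℝ × ℝ) (θ κ : ℝ → ℝ)
    (hγper : ∀ s, γ (s + L) = γ s)
    (hγinj : Set.InjOn γ (Set.Ico 0 L))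
    (hγderiv : ∀ s, HasDerivAt γ (Real.cos (θ s), Real.sin (θ s)) s)
    (hθmono : StrictMono θ)
    (hθper : ∀ s, θ (s + L) = θ s + 2 * Real.pi)
    (hθderiv : ∀ s, HasDerivAt θ (κ s) s) (hκcont : Continuous κ)
    (κ₀ κ₁ : ℝ) (hκ₀ : 0 < κ₀) (hκbd : ∀ s, κ₀ ≤ κ s ∧ κ s ≤ κ₁)
    (dF : ℝ → ℝ → ℝ)
    (hdF : ∀ s t, dF s t = sInf {x : ℝ | ∃ n : ℤ, x = |s - t + n * L|})
    (α : ℝ → ℝ) (hα : ∀ s, θ (α s) = θ s + Real.pi) :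
    ∃ c : ℝ, 0 < c ∧ ∀ ω₁ : ℝ, 0 < ω₁ → ∀ s t : ℝ,
      ω₁ ≤ min (dF s t) (dF (α s) t) →
      c * ω₁ ≤ |Real.sin (θ t - θ s)| := by
  have hπ := Real.pi_pos
  -- θ grows at least κ₀ linearly
  have hgrow : ∀ a b : ℝ, κ₀ * |b - a| ≤ |θ b - θ a| := by
    have hmono : Monotone (fun x => θ x - κ₀ * x) := by
      apply monotone_of_deriv_nonneg
      · intro x
        have hid : HasDerivAt (fun x : ℝ => κ₀ * x) κ₀ x := by
          simpa using (hasDerivAt_id x).const_mul κ₀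
        exact ((hθderiv x).sub hid).differentiableAt
      · intro x
        have hid : HasDerivAt (fun x : ℝ => κ₀ * x) κ₀ x := by
          simpa using (hasDerivAt_id x).const_mul κ₀
        rw [show (fun x => θ x - κ₀ * x) = θ - fun x => κ₀ * x from rfl, ((hθderiv x).sub hid).deriv]
        linarith [(hκbd x).1]
    have key : ∀ a b : ℝ, a ≤ b → κ₀ * (b - a) ≤ θ b - θ a := by
      intro a b hab
      have := hmono hab
      simp only at this
      nlinarith
    intro a b
    rcases le_total a b with h | h
    · rw [abs_of_nonneg (by linarith), abs_of_nonneg (by linarith [(hθmono.le_iff_le).2 h])]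
      exact key a b h
    · rw [abs_of_nonpos (by linarith), abs_of_nonpos (by linarith [(hθmono.le_iff_le).2 h])]
      have := key b a h
      linarith
  -- θ of integer translates
  have hθz : ∀ (s : ℝ) (n : ℤ), θ (s + n * L) = θ s + 2 * Real.pi * n := by
    intro s n
    induction n using Int.induction_on with
    | zero => simp
    | succ k ih =>
        have : s + ((k : ℤ) + 1 : ℤ) * L = (s + (k : ℤ) * L) + L := by push_cast; ring
        rw [this, hθper, ih]; push_cast; ring
    | pred k ih =>
        have : s + (-(k : ℤ) - 1 : ℤ) * L = (s + (-(k : ℤ) - 1 : ℤ) * L + L) - L := by ring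
        have h2 : (s + (-(k : ℤ) - 1 : ℤ) * L) + L = s + (-(k : ℤ) : ℤ) * L := by
          push_cast; ring
        have := hθper (s + (-(k : ℤ) - 1 : ℤ) * L)
        rw [h2, ih] at this
        push_cast at this ⊢
        linarith
  refine ⟨2 / Real.pi * κ₀, by positivity, ?_⟩
  intro ω₁ hω s t hmin
  -- from the inf, every representative is ≥ ω₁
  have hrep : ∀ (u : ℝ), ω₁ ≤ dF u t → ∀ n : ℤ, ω₁ ≤ |u - t + n * L| := by
    intro u hu n
    refine hu.trans ?_
    rw [hdF]
    apply csInf_le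
    · exact ⟨0, fun x ⟨m, hm⟩ => hm ▸ abs_nonneg _⟩
    · exact ⟨n, rfl⟩
  have h1 := hrep s (le_trans hmin (min_le_left _ _))
  have h2 := hrep (α s) (le_trans hmin (min_le_right _ _))
  -- distance from θ t - θ s to π·ℤ is at least κ₀ ω₁
  have hdist : ∀ m : ℤ, κ₀ * ω₁ ≤ |θ t - θ s - m * Real.pi| := by
    intro m
    rcases Int.even_or_odd m with ⟨k, hk⟩ | ⟨k, hk⟩
    · have := hgrow (s + k * L) t
      rw [hθz s k] at this
      have hb := h1 k
      calc κ₀ * ω₁ ≤ κ₀ * |s - t + k * L| := by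
            exact mul_le_mul_of_nonneg_left hb hκ₀.le
        _ = κ₀ * |t - (s + k * L)| := by rw [abs_sub_comm]; ring_nf
        _ ≤ |θ t - (θ s + 2 * Real.pi * k)| := this
        _ = |θ t - θ s - m * Real.pi| := by rw [hk]; push_cast; ring_nf
    · have := hgrow (α s + k * L) t
      rw [hθz (α s) k, hα s] at this
      have hb := h2 k
      calc κ₀ * ω₁ ≤ κ₀ * |α s - t + k * L| := by
            exact mul_le_mul_of_nonneg_left hb hκ₀.le
        _ = κ₀ * |t - (α s + k * L)| := by rw [abs_sub_comm]; ring_nf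
        _ ≤ |θ t - (θ s + Real.pi + 2 * Real.pi * k)| := this
        _ = |θ t - θ s - m * Real.pi| := by rw [hk]; push_cast; ring_nf
  set φ := θ t - θ s with hφ
  set n : ℤ := round (φ / Real.pi) with hn
  set r : ℝ := φ - n * Real.pi with hr
  have hrle : |r| ≤ Real.pi / 2 := by
    have h0 := abs_sub_round (φ / Real.pi)
    have h3 : |φ / Real.pi - n| * Real.pi ≤ (1 / 2) * Real.pi :=
      mul_le_mul_of_nonneg_right h0 hπ.le
    have habs : |r| = |φ / Real.pi - n| * Real.pi := by
      have hre : r = (φ / Real.pi - n) * Real.pi := by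
        rw [hr]; field_simp
      rw [hre, abs_mul, abs_of_pos hπ]
    rw [habs]; linarith
  have hrge : κ₀ * ω₁ ≤ |r| := hdist n
  have hsin : |Real.sin φ| = |Real.sin r| := by
    have : φ = r + n * Real.pi := by rw [hr]; ring
    have h1 : |(-1 : ℝ) ^ n| = 1 := by
      rcases Int.even_or_odd n with he | ho
      · rw [he.neg_one_zpow]; simp
      · rw [ho.neg_one_zpow]; simp
    rw [this, Real.sin_add_int_mul_pi, abs_mul, h1, one_mul]
  rw [hsin]
  have hJ : 2 / Real.pi * |r| ≤ Real.sin |r| :=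
    Real.mul_le_sin (abs_nonneg r) hrle
  have heq : abs (Real.sin |r|) = |Real.sin r| := by
    rcases abs_choice r with h | h <;> rw [h] <;> simp [Real.sin_neg]
  calc 2 / Real.pi * κ₀ * ω₁ = 2 / Real.pi * (κ₀ * ω₁) := by ring
    _ ≤ 2 / Real.pi * |r| := mul_le_mul_of_nonneg_left hrge (by positivity)
    _ ≤ Real.sin |r| := hJ
    _ ≤ abs (Real.sin |r|) := le_abs_self _
    _ = |Real.sin r| := heq
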